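/- Let s, z, w be positive real numbers, and define the complex numbers g20 = 2 · s[z^4(z+2) + w^2(3z^2 + 2z) - w^4(z+1) + i w(-z^2 + w^2 + 2 z w^2)] / (2 i w (w^2 + z^2)), g11 = s z (z^2 + 2z - i w)/(i w), and g21 = 2 · s^2 z (z+1)[-3z^2 + w^2(2z-1) - i w(3z^2 + 2z + w^2)] / (2 i w (w^2 + z^2)). Then Re(i g20 g11 + w g21) = - s^2 z^2 (z+1)(z+2)/w, which is strictly negative. -/

import Mathlib

set_option maxHeartbeats 1600000 in
open Complex in
/-- The first Lyapunov coefficient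
`l1 = Re(i g20 g11 + w g21) = -s^2 z^2 (z+1)(z+2)/w < 0`. -/
theorem first_lyapunov_coefficient (s z w : ℝ) (hs : 0 < s) (hz : 0 < z) (hw : 0 < w)
    (g20 g11 g21 : ℂ)
    (hg20 : g20 = 2 * ((s : ℂ) * ((z : ℂ) ^ 4 * ((z : ℂ) + 2) +
      (w : ℂ) ^ 2 * (3 * (z : ℂ) ^ 2 + 2 * (z : ℂ)) - (w : ℂ) ^ 4 * ((z : ℂ) + 1) +
      Complex.I * (w : ℂ) * (-(z : ℂ) ^ 2 + (w : ℂ) ^ 2 + 2 * (z : ℂ) * (w : ℂ) ^ 2)) /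
      (2 * Complex.I * (w : ℂ) * ((w : ℂ) ^ 2 + (z : ℂ) ^ 2))))
    (hg11 : g11 = (s : ℂ) * (z : ℂ) * ((z : ℂ) ^ 2 + 2 * (z : ℂ) - Complex.I * (w : ℂ)) /
      (Complex.I * (w : ℂ)))
    (hg21 : g21 = 2 * ((s : ℂ) ^ 2 * (z : ℂ) * ((z : ℂ) + 1) *
      (-3 * (z : ℂ) ^ 2 + (w : ℂ) ^ 2 * (2 * (z : ℂ) - 1) -
        Complex.I * (w : ℂ) * (3 * (z : ℂ) ^ 2 + 2 * (z : ℂ) + (w : ℂ) ^ 2)) /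
      (2 * Complex.I * (w : ℂ) * ((w : ℂ) ^ 2 + (z : ℂ) ^ 2)))) :
    (Complex.I * g20 * g11 + (w : ℂ) * g21).re =
      -(s ^ 2 * z ^ 2 * (z + 1) * (z + 2) / w) ∧
    (Complex.I * g20 * g11 + (w : ℂ) * g21).re < 0 := by
  have hwC : (w : ℂ) ≠ 0 := Complex.ofReal_ne_zero.mpr hw.ne'
  have hden : (w : ℂ) ^ 2 + (z : ℂ) ^ 2 ≠ 0 := by
    have : ((w ^ 2 + z ^ 2 : ℝ) : ℂ) ≠ 0 :=
      Complex.ofReal_ne_zero.mpr (by positivity)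
    simpa using this
  have hre : -(s ^ 2 * z ^ 2 * (z + 1) * (z + 2) / w) < 0 := by
    have : 0 < s ^ 2 * z ^ 2 * (z + 1) * (z + 2) / w := by positivity
    linarith
  have key : Complex.I * g20 * g11 + (w : ℂ) * g21 =
      ((-(s ^ 2 * z ^ 2 * (z + 1) * (z + 2) / w) : ℝ) : ℂ) +
      ((-(s ^ 2 * z * (z ^ 5 * (z + 2) ^ 2 + w ^ 2 * z ^ 3 * (3 * z + 5) +
        w ^ 4 * (z - z ^ 2 - z ^ 3)) / (w ^ 2 * (w ^ 2 + z ^ 2))) : ℝ) : ℂ) * Complex.I := by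
    subst hg20 hg11 hg21
    have hwR : (w : ℝ) ≠ 0 := hw.ne'
    have hdenR : (w : ℝ) ^ 2 + z ^ 2 ≠ 0 := by positivity
    have hD : 2 * Complex.I * (w : ℂ) * ((w : ℂ) ^ 2 + (z : ℂ) ^ 2) * (Complex.I * (w : ℂ)) ≠ 0 :=
      mul_ne_zero (mul_ne_zero (mul_ne_zero (mul_ne_zero two_ne_zero Complex.I_ne_zero) hwC) hden)
        (mul_ne_zero Complex.I_ne_zero hwC)
    have h2 : Complex.I ^ 2 = -1 := Complex.I_sq
    have h3 : Complex.I ^ 3 = -Complex.I := by rw [pow_succ, h2]; ring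
    have h4 : Complex.I ^ 4 = 1 := by rw [show (4:ℕ) = 2 * 2 by rfl, pow_mul, h2]; ring
    have h5 : Complex.I ^ 5 = Complex.I := by rw [pow_succ, h4, one_mul]
    push_cast
    field_simp [Complex.I_ne_zero, hwC, hden]
    ring_nf
    simp only [h2, h3, h4, h5]
    ring
  rw [key]
  simp only [Complex.add_re, Complex.ofReal_re, Complex.mul_re, Complex.I_re,
    Complex.ofReal_im, Complex.I_im]
  constructor <;> [ring; nlinarith [hre]]
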